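/- Let (M,χ) be a module of the system. Assume that q_j(A∪B)/q_j^M(A) = q_{j'}(A'∪B)/q_{j'}^M(A') for all j, j' ∈ M, all A ⊆ M∖{j} and A' ⊆ M∖{j'} with |A| = |A'|, q_j^M(A) ≠ 0 and q_{j'}^M(A') ≠ 0, and all B ⊆ C∖M. Then for every k ∈ {1,…,m}, every j ∈ M, and every A ⊆ M∖{j} with |A| = m−k and q_j^M(A) ≠ 0, one has p_M^{(k)} = p_k^M · ∑_{B⊆C∖M} (q_j(A∪B)/q_j^M(A)) · Δ_[M]ψ(B). -/

import Mathlib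

open MeasureTheory Finset

/-- Lifetime of the (sub)system on component set `D` with structure function `χ`
(the maximum over the sets `A ⊆ D` with `χ A = 1` of `min_{i ∈ A} T i`). -/
noncomputable def sysLifeOn {Ω : Type*} {n : ℕ} (T : Fin n → Ω → ℝ)
    (D : Finset (Fin n)) (χ : Finset (Fin n) → ℝ) (ω : Ω) : ℝ :=
  if h : (D.powerset.filter fun A => χ A = 1).Nonempty then
    (D.powerset.filter fun A => χ A = 1).sup' h
      (fun A => if hA : A.Nonempty then A.inf' hA fun i => T i ω else 0)
  else 0

/-- The `k`-th order statistic of the lifetimes `(T i)_{i ∈ M}`. -/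
noncomputable def orderStat {Ω : Type*} {n : ℕ} (T : Fin n → Ω → ℝ)
    (M : Finset (Fin n)) (k : ℕ) (ω : Ω) : ℝ :=
  ((M.val.map fun i => T i ω).sort (· ≤ ·)).getD (k - 1) 0

/-- The relative quality function `q_j(A) = Pr(max_{i ∈ C∖A} T_i = T_j < min_{i ∈ A} T_i)`. -/
noncomputable def relQual {Ω : Type*} [MeasurableSpace Ω] {n : ℕ} (μ : Measure Ω)
    (T : Fin n → Ω → ℝ) (j : Fin n) (A : Finset (Fin n)) : ℝ :=
  (μ {ω | (∀ i ∉ A, T i ω ≤ T j ω) ∧ ∀ i ∈ A, T j ω < T i ω}).toReal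

/-- The relative quality function of component `j` within the module `(M,χ)`:
`q_j^M(A) = Pr(max_{i ∈ M∖A} T_i = T_j < min_{i ∈ A} T_i)`. -/
noncomputable def relQualMod {Ω : Type*} [MeasurableSpace Ω] {n : ℕ} (μ : Measure Ω)
    (T : Fin n → Ω → ℝ) (M : Finset (Fin n)) (j : Fin n) (A : Finset (Fin n)) : ℝ :=
  (μ {ω | (∀ i ∈ M, i ∉ A → T i ω ≤ T j ω) ∧ ∀ i ∈ A, T j ω < T i ω}).toReal

/-! ### Auxiliary lemmas -/

section Aux

lemma countP_le_get : ∀ (l : List ℝ), l.Pairwise (· ≤ ·) → l.Nodup →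
    ∀ (i : ℕ) (h : i < l.length), l.countP (fun x => decide (x ≤ l.get ⟨i, h⟩)) = i + 1 := by
  intro l
  induction l with
  | nil => intro _ _ i h; simp at h
  | cons a t ih =>
    intro hs hn i h
    have hat : ∀ x ∈ t, a < x := fun x hx =>
      lt_of_le_of_ne ((List.pairwise_cons.mp hs).1 x hx)
        (by rintro rfl; exact (List.nodup_cons.mp hn).1 hx)
    cases i with
    | zero =>
      have hg : (a::t).get ⟨0, h⟩ = a := rfl
      rw [hg, List.countP_cons_of_pos (p := fun x => decide (x ≤ a)) (by simp)]
      have ht0 : t.countP (fun x => decide (x ≤ a)) = 0 :=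
        List.countP_eq_zero.mpr (fun x hx => by simpa using not_le.mpr (hat x hx))
      simp [ht0]
    | succ i =>
      have h' : i < t.length := by simpa using h
      have hg : (a::t).get ⟨i+1, h⟩ = t.get ⟨i, h'⟩ := rfl
      rw [hg, List.countP_cons_of_pos (p := fun x => decide (x ≤ t.get ⟨i, h'⟩))
        (by simpa using le_of_lt (hat _ (t.get_mem ⟨i, h'⟩))),
        ih (List.pairwise_cons.mp hs).2 (List.nodup_cons.mp hn).2 i h']

variable {Ω : Type*} {n : ℕ} {T : Fin n → Ω → ℝ} {M W : Finset (Fin n)} {ω : Ω} {k : ℕ}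
  {f : Finset (Fin n) → ℝ}

lemma countP_list_eq_card (c : ℝ) :
    ((M.val.map fun i => T i ω).sort (· ≤ ·)).countP (fun x => decide (x ≤ c)) =
      (M.filter fun i => T i ω ≤ c).card := by
  classical
  have h1 : ((M.val.map fun i => T i ω).sort (· ≤ ·) : Multiset ℝ) = M.val.map fun i => T i ω :=
    Multiset.sort_eq _ _
  have h2 : Multiset.countP (fun x => x ≤ c) ((M.val.map fun i => T i ω).sort (· ≤ ·) : Multiset ℝ)
      = Multiset.countP (fun x => x ≤ c) (M.val.map fun i => T i ω) := by rw [h1]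
  rw [Multiset.coe_countP] at h2
  rw [h2, Multiset.countP_map]
  rw [Finset.card_filter]
  simp [Finset.sum_boole]
  rfl

lemma orderStat_eq_iff (hdist : ∀ i ∈ M, ∀ i' ∈ M, i ≠ i' → T i ω ≠ T i' ω)
    (hk1 : 1 ≤ k) (hk2 : k ≤ M.card) {j : Fin n} (hj : j ∈ M) :
    orderStat T M k ω = T j ω ↔ (M.filter fun i => T j ω < T i ω).card = M.card - k := by
  classical
  set l := ((M.val.map fun i => T i ω).sort (· ≤ ·)) with hl
  have hcoe : (l : Multiset ℝ) = M.val.map fun i => T i ω := Multiset.sort_eq _ _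
  have hlen : l.length = M.card := by
    have := congrArg Multiset.card hcoe
    simpa using this
  have hnd : l.Nodup := by
    rw [← Multiset.coe_nodup, hcoe]
    exact Multiset.Nodup.map_on (fun i hi i' hi' he => by
      by_contra hne
      exact hdist i hi i' hi' hne he) M.nodup
  have hsort : l.Pairwise (· ≤ ·) := Multiset.pairwise_sort _ _
  have hklt : k - 1 < l.length := by omega
  have hget : orderStat T M k ω = l.get ⟨k - 1, hklt⟩ := by
    rw [orderStat, ← hl, List.getD_eq_getElem (hn := hklt), List.get_eq_getElem]
  set x := l.get ⟨k - 1, hklt⟩ with hx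
  have hxcount : (M.filter fun i => T i ω ≤ x).card = k := by
    rw [← countP_list_eq_card (T := T), ← hl, countP_le_get l hsort hnd _ hklt]
    omega
  have hxmem : ∃ j' ∈ M, T j' ω = x := by
    have : x ∈ (l : Multiset ℝ) := by exact_mod_cast l.get_mem _
    rw [hcoe] at this
    simpa using (Multiset.mem_map.mp this).imp (fun i hi => ⟨hi.1, hi.2⟩)
  have hinj : ∀ a ∈ M, ∀ b ∈ M, (M.filter fun i => T i ω ≤ T a ω).card =
      (M.filter fun i => T i ω ≤ T b ω).card → T a ω = T b ω := by
    have key : ∀ a ∈ M, ∀ b ∈ M, T a ω < T b ω →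
        (M.filter fun i => T i ω ≤ T a ω).card < (M.filter fun i => T i ω ≤ T b ω).card := by
      intro a ha b hb hab
      apply Finset.card_lt_card
      constructor
      · intro i hi
        simp only [Finset.mem_filter] at hi ⊢
        exact ⟨hi.1, hi.2.trans hab.le⟩
      · intro hsub
        have := hsub (Finset.mem_filter.mpr ⟨hb, le_refl _⟩)
        simp only [Finset.mem_filter] at this
        exact absurd this.2 (not_le.mpr hab)
    intro a ha b hb he
    rcases lt_trichotomy (T a ω) (T b ω) with h | h | h
    · exact absurd he (Nat.ne_of_lt (key a ha b hb h))
    · exact h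
    · exact absurd he.symm (Nat.ne_of_lt (key b hb a ha h))
  obtain ⟨j', hj', hxj'⟩ := hxmem
  have hcardsum : (M.filter fun i => T i ω ≤ T j ω).card
      + (M.filter fun i => T j ω < T i ω).card = M.card := by
    have e : (M.filter fun i => ¬ T i ω ≤ T j ω) = M.filter fun i => T j ω < T i ω := by
      apply Finset.filter_congr; intro i _; simp [not_le]
    have := Finset.card_filter_add_card_filter_not (s := M) (p := fun i => T i ω ≤ T j ω)
    rw [e] at this
    omega
  constructor
  · intro h
    rw [hget] at h
    rw [h] at hxcount
    omega
  · intro h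
    have hle : (M.filter fun i => T i ω ≤ T j ω).card = k := by omega
    rw [hget, ← hxj']
    exact (hinj j hj j' hj' (by rw [hle, hxj', hxcount])).symm

lemma orderStat_mem (hk1 : 1 ≤ k) (hk2 : k ≤ M.card) :
    ∃ j ∈ M, orderStat T M k ω = T j ω := by
  set l := ((M.val.map fun i => T i ω).sort (· ≤ ·)) with hl
  have hcoe : (l : Multiset ℝ) = M.val.map fun i => T i ω := Multiset.sort_eq _ _
  have hlen : l.length = M.card := by
    have := congrArg Multiset.card hcoe
    simpa using this
  have hklt : k - 1 < l.length := by omega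
  have hx : orderStat T M k ω = l.get ⟨k - 1, hklt⟩ := by
    rw [orderStat, ← hl, List.getD_eq_getElem (hn := hklt), List.get_eq_getElem]
  have : l.get ⟨k - 1, hklt⟩ ∈ (l : Multiset ℝ) := by exact_mod_cast l.get_mem _
  rw [hcoe] at this
  obtain ⟨j, hj, hje⟩ := Multiset.mem_map.mp this
  exact ⟨j, hj, by rw [hx, hje]⟩

section Struct
variable (hmono : ∀ A B : Finset (Fin n), A ⊆ B → B ⊆ W → f A ≤ f B)
  (h01 : ∀ A, A ⊆ W → f A = 0 ∨ f A = 1)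
  (hempty : f ∅ = 0) (hfull : f W = 1)

include h01 hmono in
lemma fone {A B : Finset (Fin n)} (hA : f A = 1) (hAB : A ⊆ B) (hBW : B ⊆ W) : f B = 1 := by
  rcases h01 B hBW with h | h
  · have := hmono A B hAB hBW
    rw [hA, h] at this
    norm_num at this
  · exact h

include hempty in
lemma fnonempty {A : Finset (Fin n)} (hA : f A = 1) : A.Nonempty := by
  rcases A.eq_empty_or_nonempty with rfl | h
  · rw [hempty] at hA; norm_num at hA
  · exact h

include hmono h01 hempty hfull in
lemma sysLife_ge_iff (t : ℝ) :
    t ≤ sysLifeOn T W f ω ↔ f (W.filter fun i => t ≤ T i ω) = 1 := by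
  have hne : (W.powerset.filter fun A => f A = 1).Nonempty :=
    ⟨W, by simp [hfull]⟩
  rw [sysLifeOn, dif_pos hne]
  constructor
  · intro ht
    obtain ⟨A, hAmem, hAe⟩ := Finset.exists_mem_eq_sup' hne
      (fun A => if hA : A.Nonempty then A.inf' hA fun i => T i ω else 0)
    simp only [Finset.mem_filter, Finset.mem_powerset] at hAmem
    rw [hAe] at ht
    have hAne : A.Nonempty := fnonempty hempty hAmem.2
    rw [dif_pos hAne] at ht
    have hsub : A ⊆ W.filter fun i => t ≤ T i ω := by
      intro i hi
      exact Finset.mem_filter.mpr ⟨hAmem.1 hi, ht.trans (Finset.inf'_le _ hi)⟩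
    exact fone hmono h01 hAmem.2 hsub (Finset.filter_subset _ _)
  · intro hf
    have hne' : (W.filter fun i => t ≤ T i ω).Nonempty := fnonempty hempty hf
    have : t ≤ (W.filter fun i => t ≤ T i ω).inf' hne' fun i => T i ω := by
      rw [Finset.le_inf'_iff]
      intro i hi
      exact (Finset.mem_filter.mp hi).2
    refine le_trans this ?_
    refine le_trans ?_ (Finset.le_sup' _ (b := W.filter fun i => t ≤ T i ω)
      (by simp [hf, Finset.filter_subset]))
    rw [dif_pos hne']

include hmono h01 hempty hfull in
lemma sysLife_eq_iff (j : Fin n) :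
    sysLifeOn T W f ω = T j ω ↔
      f (W.filter fun i => T j ω ≤ T i ω) = 1 ∧ f (W.filter fun i => T j ω < T i ω) = 0 := by
  set S := sysLifeOn T W f ω with hS
  constructor
  · intro h
    refine ⟨(sysLife_ge_iff hmono h01 hempty hfull _).mp h.ge, ?_⟩
    by_contra hne
    have h1 : f (W.filter fun i => T j ω < T i ω) = 1 := by
      rcases h01 _ (Finset.filter_subset (fun i => T j ω < T i ω) W) with h' | h'
      · exact absurd h' hne
      · exact h'
    have hne' : (W.filter fun i => T j ω < T i ω).Nonempty := fnonempty hempty h1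
    set t := (W.filter fun i => T j ω < T i ω).inf' hne' fun i => T i ω with ht
    have htgt : T j ω < t := by
      rw [ht, Finset.lt_inf'_iff]
      intro i hi
      exact (Finset.mem_filter.mp hi).2
    have : t ≤ S := by
      rw [sysLife_ge_iff hmono h01 hempty hfull]
      refine fone hmono h01 h1 ?_ (Finset.filter_subset _ _)
      intro i hi
      exact Finset.mem_filter.mpr ⟨(Finset.mem_filter.mp hi).1, Finset.inf'_le _ hi⟩
    rw [h] at this
    exact absurd (htgt.trans_le this) (lt_irrefl _)
  · rintro ⟨h1, h2⟩
    have hge : T j ω ≤ S := (sysLife_ge_iff hmono h01 hempty hfull _).mpr h1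
    rcases hge.lt_or_eq with hlt | he
    · exfalso
      have : f (W.filter fun i => S ≤ T i ω) = 1 :=
        (sysLife_ge_iff hmono h01 hempty hfull _).mp le_rfl
      have : f (W.filter fun i => T j ω < T i ω) = 1 := by
        refine fone hmono h01 this ?_ (Finset.filter_subset _ _)
        intro i hi
        rw [Finset.mem_filter] at hi ⊢
        exact ⟨hi.1, hlt.trans_le hi.2⟩
      rw [this] at h2
      norm_num at h2
    · exact he.symm

end Struct

/-- The event that exactly the components in `A` outlive `j`, among components of `W`. -/
def evSet (T : Fin n → Ω → ℝ) (W : Finset (Fin n)) (j : Fin n) (A : Finset (Fin n)) : Set Ω :=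
  {ω | (∀ i ∈ W, i ∉ A → i ≠ j → T i ω < T j ω) ∧ ∀ i ∈ A, T j ω < T i ω}

/-- filter ≤ is insert of filter < -/
lemma filter_le_eq_insert (hdist : ∀ i i', i ≠ i' → T i ω ≠ T i' ω) {j : Fin n} (hj : j ∈ W) :
    (W.filter fun i => T j ω ≤ T i ω) = insert j (W.filter fun i => T j ω < T i ω) := by
  ext i
  simp only [Finset.mem_filter, Finset.mem_insert]
  constructor
  · rintro ⟨hiW, hle⟩
    by_cases hij : i = j
    · exact Or.inl hij
    · exact Or.inr ⟨hiW, lt_of_le_of_ne hle (fun he => hdist j i (Ne.symm hij) he)⟩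
  · rintro (rfl | ⟨hiW, hlt⟩)
    · exact ⟨hj, le_refl _⟩
    · exact ⟨hiW, hlt.le⟩

lemma pointwise_iff (hmono : ∀ A B : Finset (Fin n), A ⊆ B → B ⊆ W → f A ≤ f B)
    (h01 : ∀ A, A ⊆ W → f A = 0 ∨ f A = 1)
    (hempty : f ∅ = 0) (hfull : f W = 1) (hMW : M ⊆ W)
    (hdist : ∀ i i', i ≠ i' → T i ω ≠ T i' ω)
    (hk1 : 1 ≤ k) (hk2 : k ≤ M.card) :
    sysLifeOn T W f ω = orderStat T M k ω ↔
      ∃ j ∈ M, ∃ A, A ⊆ W \ {j} ∧ (A ∩ M).card = M.card - k ∧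
        f (insert j A) = 1 ∧ f A = 0 ∧ ω ∈ evSet T W j A := by
  have hdistM : ∀ i ∈ M, ∀ i' ∈ M, i ≠ i' → T i ω ≠ T i' ω :=
    fun i _ i' _ h => hdist i i' h
  constructor
  · intro h
    obtain ⟨j, hjM, hjx⟩ := orderStat_mem (ω := ω) hk1 hk2
    set A := W.filter fun i => T j ω < T i ω with hA
    have hAW : A ⊆ W \ {j} := by
      intro i hi
      rw [Finset.mem_filter] at hi
      refine Finset.mem_sdiff.mpr ⟨hi.1, ?_⟩
      simp only [Finset.mem_singleton]
      rintro rfl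
      exact absurd hi.2 (lt_irrefl _)
    have hAMcap : A ∩ M = M.filter fun i => T j ω < T i ω := by
      ext i
      simp only [hA, Finset.mem_inter, Finset.mem_filter]
      constructor
      · rintro ⟨⟨_, hlt⟩, hiM⟩; exact ⟨hiM, hlt⟩
      · rintro ⟨hiM, hlt⟩; exact ⟨⟨hMW hiM, hlt⟩, hiM⟩
    have hcard : (A ∩ M).card = M.card - k := by
      rw [hAMcap]
      exact (orderStat_eq_iff hdistM hk1 hk2 hjM).mp hjx
    have hsys : sysLifeOn T W f ω = T j ω := h.trans hjx
    obtain ⟨h1, h2⟩ := (sysLife_eq_iff hmono h01 hempty hfull j).mp hsys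
    rw [filter_le_eq_insert hdist (hMW hjM)] at h1
    refine ⟨j, hjM, A, hAW, hcard, h1, h2, ?_, ?_⟩
    · intro i hiW hiA hij
      have : ¬ T j ω < T i ω := fun hlt => hiA (Finset.mem_filter.mpr ⟨hiW, hlt⟩)
      exact lt_of_le_of_ne (not_lt.mp this) (fun he => hdist i j hij he)
    · intro i hi
      exact (Finset.mem_filter.mp hi).2
  · rintro ⟨j, hjM, A, hAW, hcard, h1, h2, hev1, hev2⟩
    have hAeq : (W.filter fun i => T j ω < T i ω) = A := by
      ext i
      rw [Finset.mem_filter]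
      constructor
      · rintro ⟨hiW, hlt⟩
        by_contra hiA
        have hij : i ≠ j := fun he => by subst he; exact absurd hlt (lt_irrefl _)
        exact absurd (hev1 i hiW hiA hij) (asymm hlt)
      · intro hi
        exact ⟨(Finset.mem_sdiff.mp (hAW hi)).1, hev2 i hi⟩
    have hsys : sysLifeOn T W f ω = T j ω := by
      rw [sysLife_eq_iff hmono h01 hempty hfull j,
        filter_le_eq_insert hdist (hMW hjM), hAeq]
      exact ⟨h1, h2⟩
    have hord : orderStat T M k ω = T j ω := by
      rw [orderStat_eq_iff hdistM hk1 hk2 hjM]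
      have : (M.filter fun i => T j ω < T i ω) = A ∩ M := by
        ext i
        simp only [Finset.mem_filter, Finset.mem_inter]
        constructor
        · rintro ⟨hiM, hlt⟩
          have : i ∈ W.filter fun i => T j ω < T i ω :=
            Finset.mem_filter.mpr ⟨hMW hiM, hlt⟩
          rw [hAeq] at this
          exact ⟨this, hiM⟩
        · rintro ⟨hiA, hiM⟩
          exact ⟨hiM, hev2 i hiA⟩
      rw [this, hcard]
    rw [hsys, hord]

end Aux

section MeasAux

variable {Ω : Type*} [MeasurableSpace Ω] {n : ℕ}

lemma meas_lt_set {T : Fin n → Ω → ℝ} (hTmeas : ∀ i, Measurable (T i))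
    (S : Finset (Fin n)) (j : Fin n) :
    MeasurableSet {ω | ∀ i ∈ S, T i ω < T j ω} := by
  have : {ω | ∀ i ∈ S, T i ω < T j ω} = ⋂ i ∈ (S : Set (Fin n)), {ω | T i ω < T j ω} := by
    ext ω; simp
  rw [this]
  exact MeasurableSet.biInter (S : Set (Fin n)).to_countable
    (fun i _ => measurableSet_lt (hTmeas i) (hTmeas j))

lemma meas_gt_set {T : Fin n → Ω → ℝ} (hTmeas : ∀ i, Measurable (T i))
    (S : Finset (Fin n)) (j : Fin n) :
    MeasurableSet {ω | ∀ i ∈ S, T j ω < T i ω} := by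
  have : {ω | ∀ i ∈ S, T j ω < T i ω} = ⋂ i ∈ (S : Set (Fin n)), {ω | T j ω < T i ω} := by
    ext ω; simp
  rw [this]
  exact MeasurableSet.biInter (S : Set (Fin n)).to_countable
    (fun i _ => measurableSet_lt (hTmeas j) (hTmeas i))

lemma evSet_meas {T : Fin n → Ω → ℝ} (hTmeas : ∀ i, Measurable (T i))
    (W : Finset (Fin n)) (j : Fin n) (A : Finset (Fin n)) :
    MeasurableSet (evSet T W j A) := by
  have : evSet T W j A =
      {ω | ∀ i ∈ (W \ A).erase j, T i ω < T j ω} ∩ {ω | ∀ i ∈ A, T j ω < T i ω} := by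
    ext ω
    simp only [evSet, Set.mem_setOf_eq, Set.mem_inter_iff, Finset.mem_erase, Finset.mem_sdiff]
    constructor
    · rintro ⟨h1, h2⟩
      exact ⟨fun i hi => h1 i hi.2.1 hi.2.2 hi.1, h2⟩
    · rintro ⟨h1, h2⟩
      exact ⟨fun i hiW hiA hij => h1 i ⟨hij, hiW, hiA⟩, h2⟩
  rw [this]
  exact (meas_lt_set hTmeas _ _).inter (meas_gt_set hTmeas _ _)

/-- The set of sample points where two lifetimes coincide. -/
def badSet (T : Fin n → Ω → ℝ) : Set Ω := {ω | ∃ i i', i ≠ i' ∧ T i ω = T i' ω}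

lemma badSet_null {T : Fin n → Ω → ℝ} (μ : Measure Ω)
    (hties : ∀ i j : Fin n, i ≠ j → μ {ω | T i ω = T j ω} = 0) :
    μ (badSet T) = 0 := by
  have hsub : badSet T ⊆ ⋃ i : Fin n, ⋃ i' : Fin n,
      {ω | i ≠ i' ∧ T i ω = T i' ω} := by
    rintro ω ⟨i, i', hne, he⟩
    exact Set.mem_iUnion.mpr ⟨i, Set.mem_iUnion.mpr ⟨i', hne, he⟩⟩
  refine measure_mono_null hsub ?_
  refine measure_iUnion_null fun i => measure_iUnion_null fun i' => ?_
  by_cases h : i = i'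
  · subst h
    simp
  · refine measure_mono_null (fun ω hω => hω.2) (hties i i' h)

lemma evSet_measure_eq {T : Fin n → Ω → ℝ} (μ : Measure Ω)
    (hties : ∀ i j : Fin n, i ≠ j → μ {ω | T i ω = T j ω} = 0)
    (W : Finset (Fin n)) (j : Fin n) (A : Finset (Fin n)) :
    μ (evSet T W j A) =
      μ {ω | (∀ i ∈ W, i ∉ A → T i ω ≤ T j ω) ∧ ∀ i ∈ A, T j ω < T i ω} := by
  set t := {ω | (∀ i ∈ W, i ∉ A → T i ω ≤ T j ω) ∧ ∀ i ∈ A, T j ω < T i ω}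
  have hsub : evSet T W j A ⊆ t := by
    rintro ω ⟨h1, h2⟩
    refine ⟨fun i hiW hiA => ?_, h2⟩
    by_cases hij : i = j
    · subst hij; exact le_refl _
    · exact (h1 i hiW hiA hij).le
  have hdiff : t \ evSet T W j A ⊆ badSet T := by
    rintro ω ⟨ht, hev⟩
    rw [evSet, Set.mem_setOf_eq, not_and_or] at hev
    rcases hev with hev | hev
    · push_neg at hev
      obtain ⟨i, hiW, hiA, hij, hge⟩ := hev
      exact ⟨i, j, hij, le_antisymm (ht.1 i hiW hiA) hge⟩
    · exact absurd ht.2 hev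
  refine le_antisymm (measure_mono hsub) ?_
  calc μ t = μ (evSet T W j A ∪ t \ evSet T W j A) := by
        rw [Set.union_diff_cancel' (le_refl _) hsub]
      _ ≤ μ (evSet T W j A) + μ (t \ evSet T W j A) := measure_union_le _ _
      _ ≤ μ (evSet T W j A) + 0 :=
        add_le_add le_rfl (le_of_eq (measure_mono_null hdiff (badSet_null μ hties)))
      _ = μ (evSet T W j A) := by rw [add_zero]

omit [MeasurableSpace Ω] in
lemma evSet_subset_aux {T : Fin n → Ω → ℝ} {W M : Finset (Fin n)} {j j' : Fin n}
    {A A' : Finset (Fin n)} {ω : Ω} (hMW : M ⊆ W) (hj : j ∈ M)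
    (hA : A ⊆ W \ {j}) (hA' : A' ⊆ W \ {j'})
    (h1 : ω ∈ evSet T W j A) (h2 : ω ∈ evSet T W j' A')
    (hne : j ≠ j') (hlt : T j' ω < T j ω) :
    insert j (A ∩ M) ⊆ A' ∩ M := by
  have hjA' : j ∈ A' := by
    by_contra hjA'
    exact absurd (h2.1 j (hMW hj) hjA' hne) (asymm hlt)
  intro i hi
  rcases Finset.mem_insert.mp hi with rfl | hi
  · exact Finset.mem_inter.mpr ⟨hjA', hj⟩
  · have hiA := (Finset.mem_inter.mp hi).1
    have hiM := (Finset.mem_inter.mp hi).2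
    have hiW : i ∈ W := (Finset.mem_sdiff.mp (hA hiA)).1
    have hgt : T j' ω < T i ω := hlt.trans (h1.2 i hiA)
    have hij' : i ≠ j' := fun h => by subst h; exact absurd hgt (lt_irrefl _)
    refine Finset.mem_inter.mpr ⟨?_, hiM⟩
    by_contra hiA'
    exact absurd (h2.1 i hiW hiA' hij') (asymm hgt)

omit [MeasurableSpace Ω] in
lemma evSet_disjoint {T : Fin n → Ω → ℝ} {W M : Finset (Fin n)} {j j' : Fin n}
    {A A' : Finset (Fin n)} {c : ℕ} (hMW : M ⊆ W) (hj : j ∈ M) (hj' : j' ∈ M)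
    (hA : A ⊆ W \ {j}) (hA' : A' ⊆ W \ {j'})
    (hcA : (A ∩ M).card = c) (hcA' : (A' ∩ M).card = c)
    (hne : (j, A) ≠ (j', A')) :
    Disjoint (evSet T W j A) (evSet T W j' A') := by
  rw [Set.disjoint_left]
  intro ω h1 h2
  have hjA : j ∉ A := fun h => by simpa using (Finset.mem_sdiff.mp (hA h)).2
  have hj'A' : j' ∉ A' := fun h => by simpa using (Finset.mem_sdiff.mp (hA' h)).2
  by_cases hjj : j = j'
  · subst hjj
    have hAA' : A = A' := by
      apply Finset.Subset.antisymm
      · intro i hi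
        have hiW : i ∈ W := (Finset.mem_sdiff.mp (hA hi)).1
        have hij : i ≠ j := fun h => by
          subst h; exact hjA hi
        by_contra hiA'
        exact absurd (h2.1 i hiW hiA' hij) (asymm (h1.2 i hi))
      · intro i hi
        have hiW : i ∈ W := (Finset.mem_sdiff.mp (hA' hi)).1
        have hij : i ≠ j := fun h => by
          subst h; exact hj'A' hi
        by_contra hiA
        exact absurd (h1.1 i hiW hiA hij) (asymm (h2.2 i hi))
    exact hne (by rw [hAA'])
  · have hcard : ∀ {a : Fin n} {B B' : Finset (Fin n)}, a ∈ M → B ⊆ W \ {a} →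
        insert a (B ∩ M) ⊆ B' ∩ M → (B ∩ M).card < (B' ∩ M).card := by
      intro a B B' ha hB hsub
      have haB : a ∉ B ∩ M := fun h => by
        simpa using (Finset.mem_sdiff.mp (hB (Finset.mem_inter.mp h).1)).2
      calc (B ∩ M).card < (insert a (B ∩ M)).card := by
            rw [Finset.card_insert_of_notMem haB]; omega
        _ ≤ (B' ∩ M).card := Finset.card_le_card hsub
    rcases lt_trichotomy (T j' ω) (T j ω) with hlt | heq | hgt
    · have := hcard hj hA (evSet_subset_aux hMW hj hA hA' h1 h2 hjj hlt)
      omega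
    · by_cases hj'A : j' ∈ A
      · exact absurd heq ((h1.2 j' hj'A).ne')
      · exact absurd heq (ne_of_lt (h1.1 j' (hMW hj') hj'A (Ne.symm hjj)))
    · have := hcard hj' hA' (evSet_subset_aux hMW hj' hA' hA h2 h1 (Ne.symm hjj) hgt)
      omega

end MeasAux


lemma finset_inter_union_diff {α : Type*} [DecidableEq α] (s t : Finset α) :
    (s ∩ t) ∪ (s \ t) = s := by
  ext i
  simp only [Finset.mem_union, Finset.mem_inter, Finset.mem_sdiff]
  tauto

theorem stmt_17 {Ω : Type*} [MeasurableSpace Ω] (μ : Measure Ω) [IsProbabilityMeasure μ]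
    {n : ℕ} (T : Fin n → Ω → ℝ) (hTmeas : ∀ i, Measurable (T i))
    (hTnonneg : ∀ i ω, 0 ≤ T i ω)
    (hties : ∀ i j : Fin n, i ≠ j → μ {ω | T i ω = T j ω} = 0)
    (φ : Finset (Fin n) → ℝ)
    (hφ01 : ∀ A, φ A = 0 ∨ φ A = 1)
    (hφmono : ∀ A B : Finset (Fin n), A ⊆ B → φ A ≤ φ B)
    (hφempty : φ ∅ = 0) (hφfull : φ Finset.univ = 1)
    (M : Finset (Fin n)) (hM : M.Nonempty)
    (χ : Finset (Fin n) → ℝ) (ψ : Finset (Fin n) → Bool → ℝ)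
    (hχ01 : ∀ A, A ⊆ M → χ A = 0 ∨ χ A = 1)
    (hχmono : ∀ A B : Finset (Fin n), A ⊆ B → B ⊆ M → χ A ≤ χ B)
    (hχempty : χ ∅ = 0) (hχfull : χ M = 1)
    (hψ01 : ∀ B b, B ⊆ Finset.univ \ M → ψ B b = 0 ∨ ψ B b = 1)
    (hψmono : ∀ (B B' : Finset (Fin n)) (b b' : Bool), B ⊆ B' → B' ⊆ Finset.univ \ M →
      (b = true → b' = true) → ψ B b ≤ ψ B' b')
    (hψempty : ψ ∅ false = 0) (hψfull : ψ (Finset.univ \ M) true = 1)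
    (hmod : ∀ A : Finset (Fin n),
      φ A = ψ (A \ M) (if χ (A ∩ M) = 1 then true else false))
    (hratio : ∀ j ∈ M, ∀ j' ∈ M, ∀ A ⊆ M \ {j}, ∀ A' ⊆ M \ {j'},
      A.card = A'.card → relQualMod μ T M j A ≠ 0 → relQualMod μ T M j' A' ≠ 0 →
      ∀ B ⊆ Finset.univ \ M,
        relQual μ T j (A ∪ B) / relQualMod μ T M j A =
          relQual μ T j' (A' ∪ B) / relQualMod μ T M j' A') :
    ∀ k : ℕ, 1 ≤ k → k ≤ M.card → ∀ j ∈ M, ∀ A ⊆ M \ {j},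
      A.card = M.card - k → relQualMod μ T M j A ≠ 0 →
      (μ {ω | sysLifeOn T Finset.univ φ ω = orderStat T M k ω}).toReal =
        (μ {ω | sysLifeOn T M χ ω = orderStat T M k ω}).toReal *
          ∑ B ∈ ((Finset.univ : Finset (Fin n)) \ M).powerset,
            (relQual μ T j (A ∪ B) / relQualMod μ T M j A) * (ψ B true - ψ B false) := by
  classical
  intro k hk1 hk2 j₀ hj₀ A₀ hA₀ hcard₀ hq₀
  set c := M.card - k with hc
  have hbad := badSet_null μ hties
  have hdist : ∀ ω, ω ∉ badSet T → ∀ i i', i ≠ i' → T i ω ≠ T i' ω := by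
    intro ω hω i i' hne he
    exact hω ⟨i, i', hne, he⟩
  have hφmono' : ∀ A B : Finset (Fin n), A ⊆ B → B ⊆ Finset.univ → φ A ≤ φ B :=
    fun A B h _ => hφmono A B h
  have hφ01' : ∀ A, A ⊆ (Finset.univ : Finset (Fin n)) → φ A = 0 ∨ φ A = 1 := fun A _ => hφ01 A
  -- index sets
  set P₁ : Finset (Fin n × Finset (Fin n)) :=
    ((Finset.univ : Finset (Fin n)) ×ˢ (Finset.univ : Finset (Fin n)).powerset).filter
      (fun p => p.1 ∈ M ∧ p.2 ⊆ Finset.univ \ {p.1} ∧ (p.2 ∩ M).card = c ∧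
        φ (insert p.1 p.2) = 1 ∧ φ p.2 = 0) with hP₁
  set P₂ : Finset (Fin n × Finset (Fin n)) :=
    ((Finset.univ : Finset (Fin n)) ×ˢ (Finset.univ : Finset (Fin n)).powerset).filter
      (fun p => p.1 ∈ M ∧ p.2 ⊆ M \ {p.1} ∧ (p.2 ∩ M).card = c ∧
        χ (insert p.1 p.2) = 1 ∧ χ p.2 = 0) with hP₂
  set BD : Finset (Finset (Fin n)) :=
    ((Finset.univ : Finset (Fin n)) \ M).powerset.filter
      (fun B => ψ B true = 1 ∧ ψ B false = 0) with hBD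
  have hmemP₁ : ∀ p : Fin n × Finset (Fin n), p ∈ P₁ ↔
      p.1 ∈ M ∧ p.2 ⊆ Finset.univ \ {p.1} ∧ (p.2 ∩ M).card = c ∧
        φ (insert p.1 p.2) = 1 ∧ φ p.2 = 0 := by
    intro p
    simp [hP₁, Finset.mem_filter, Finset.mem_product]
  have hmemP₂ : ∀ p : Fin n × Finset (Fin n), p ∈ P₂ ↔
      p.1 ∈ M ∧ p.2 ⊆ M \ {p.1} ∧ (p.2 ∩ M).card = c ∧
        χ (insert p.1 p.2) = 1 ∧ χ p.2 = 0 := by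
    intro p
    simp [hP₂, Finset.mem_filter, Finset.mem_product]
  have hmemBD : ∀ B : Finset (Fin n), B ∈ BD ↔
      B ⊆ Finset.univ \ M ∧ ψ B true = 1 ∧ ψ B false = 0 := by
    intro B
    simp [hBD, Finset.mem_filter, Finset.mem_powerset, and_assoc]
  -- Step 1 : measure of the first event as a sum over P₁
  have hsum1 : (μ {ω | sysLifeOn T Finset.univ φ ω = orderStat T M k ω}).toReal
      = ∑ p ∈ P₁, relQual μ T p.1 p.2 := by
    have hpt : ∀ ω, ω ∉ badSet T →
        (ω ∈ {ω | sysLifeOn T Finset.univ φ ω = orderStat T M k ω} ↔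
          ω ∈ ⋃ p ∈ P₁, evSet T Finset.univ p.1 p.2) := by
      intro ω hω
      rw [Set.mem_setOf_eq,
        pointwise_iff hφmono' hφ01' hφempty hφfull (Finset.subset_univ M) (hdist ω hω) hk1 hk2]
      simp only [Set.mem_iUnion, exists_prop]
      constructor
      · rintro ⟨j, hj, A, h1, h2, h3, h4, h5⟩
        exact ⟨(j, A), (hmemP₁ _).mpr ⟨hj, h1, h2, h3, h4⟩, h5⟩
      · rintro ⟨p, hp, hev⟩
        obtain ⟨hj, h1, h2, h3, h4⟩ := (hmemP₁ _).mp hp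
        exact ⟨p.1, hj, p.2, h1, h2, h3, h4, hev⟩
    have hae : {ω | sysLifeOn T Finset.univ φ ω = orderStat T M k ω}
        =ᵐ[μ] ⋃ p ∈ P₁, evSet T Finset.univ p.1 p.2 := by
      rw [MeasureTheory.ae_eq_set]
      constructor
      · refine measure_mono_null ?_ hbad
        intro ω hω
        by_contra hb
        exact hω.2 ((hpt ω hb).mp hω.1)
      · refine measure_mono_null ?_ hbad
        intro ω hω
        by_contra hb
        exact hω.2 ((hpt ω hb).mpr hω.1)
    rw [measure_congr hae, measure_biUnion_finset ?_ (fun p _ => evSet_meas hTmeas _ _ _)]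
    · rw [ENNReal.toReal_sum (fun p _ => measure_ne_top μ _)]
      refine Finset.sum_congr rfl (fun p hp => ?_)
      rw [evSet_measure_eq μ hties Finset.univ p.1 p.2, relQual]
      congr 2
      ext ω
      simp
    · intro p hp q hq hne
      obtain ⟨hj, h1, h2, _, _⟩ := (hmemP₁ _).mp (Finset.mem_coe.mp hp)
      obtain ⟨hj', h1', h2', _, _⟩ := (hmemP₁ _).mp (Finset.mem_coe.mp hq)
      exact evSet_disjoint (Finset.subset_univ M) hj hj' h1 h1' h2 h2'
        (by simpa using hne)
  -- Step 2 : measure of the second event as a sum over P₂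
  have hsum2 : (μ {ω | sysLifeOn T M χ ω = orderStat T M k ω}).toReal
      = ∑ p ∈ P₂, relQualMod μ T M p.1 p.2 := by
    have hpt : ∀ ω, ω ∉ badSet T →
        (ω ∈ {ω | sysLifeOn T M χ ω = orderStat T M k ω} ↔
          ω ∈ ⋃ p ∈ P₂, evSet T M p.1 p.2) := by
      intro ω hω
      rw [Set.mem_setOf_eq,
        pointwise_iff hχmono hχ01 hχempty hχfull (Finset.Subset.refl M) (hdist ω hω) hk1 hk2]
      simp only [Set.mem_iUnion, exists_prop]
      constructor
      · rintro ⟨j, hj, A, h1, h2, h3, h4, h5⟩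
        exact ⟨(j, A), (hmemP₂ _).mpr ⟨hj, h1, h2, h3, h4⟩, h5⟩
      · rintro ⟨p, hp, hev⟩
        obtain ⟨hj, h1, h2, h3, h4⟩ := (hmemP₂ _).mp hp
        exact ⟨p.1, hj, p.2, h1, h2, h3, h4, hev⟩
    have hae : {ω | sysLifeOn T M χ ω = orderStat T M k ω}
        =ᵐ[μ] ⋃ p ∈ P₂, evSet T M p.1 p.2 := by
      rw [MeasureTheory.ae_eq_set]
      constructor
      · refine measure_mono_null ?_ hbad
        intro ω hω
        by_contra hb
        exact hω.2 ((hpt ω hb).mp hω.1)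
      · refine measure_mono_null ?_ hbad
        intro ω hω
        by_contra hb
        exact hω.2 ((hpt ω hb).mpr hω.1)
    rw [measure_congr hae, measure_biUnion_finset ?_ (fun p _ => evSet_meas hTmeas _ _ _)]
    · rw [ENNReal.toReal_sum (fun p _ => measure_ne_top μ _)]
      refine Finset.sum_congr rfl (fun p hp => ?_)
      rw [evSet_measure_eq μ hties M p.1 p.2, relQualMod]
    · intro p hp q hq hne
      obtain ⟨hj, h1, h2, _, _⟩ := (hmemP₂ _).mp (Finset.mem_coe.mp hp)
      obtain ⟨hj', h1', h2', _, _⟩ := (hmemP₂ _).mp (Finset.mem_coe.mp hq)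
      exact evSet_disjoint (Finset.Subset.refl M) hj hj' h1 h1' h2 h2' (by simpa using hne)
  -- set-algebra facts for the splitting
  have hsplit1 : ∀ {A B : Finset (Fin n)}, A ⊆ M → (∀ i ∈ B, i ∉ M) → (A ∪ B) ∩ M = A := by
    intro A B hAM hBM
    ext i
    simp only [Finset.mem_inter, Finset.mem_union]
    constructor
    · rintro ⟨hi | hi, hiM⟩
      · exact hi
      · exact absurd hiM (hBM i hi)
    · intro hi
      exact ⟨Or.inl hi, hAM hi⟩
  have hsplit2 : ∀ {A B : Finset (Fin n)}, A ⊆ M → (∀ i ∈ B, i ∉ M) → (A ∪ B) \ M = B := by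
    intro A B hAM hBM
    ext i
    simp only [Finset.mem_sdiff, Finset.mem_union]
    constructor
    · rintro ⟨hi | hi, hiM⟩
      · exact absurd (hAM hi) hiM
      · exact hi
    · intro hi
      exact ⟨Or.inr hi, hBM i hi⟩
  -- the key equivalence for φ-conditions
  have hkey : ∀ {j : Fin n} {A B : Finset (Fin n)}, j ∈ M → A ⊆ M \ {j} →
      B ⊆ Finset.univ \ M →
      ((φ (insert j (A ∪ B)) = 1 ∧ φ (A ∪ B) = 0) ↔
        (χ (insert j A) = 1 ∧ χ A = 0 ∧ ψ B true = 1 ∧ ψ B false = 0)) := by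
    intro j A B hj hA hB
    have hAM : A ⊆ M := hA.trans (Finset.sdiff_subset)
    have hBM : ∀ i ∈ B, i ∉ M := fun i hi => (Finset.mem_sdiff.mp (hB hi)).2
    have hiAM : insert j A ⊆ M := Finset.insert_subset hj hAM
    have e1 : (A ∪ B) ∩ M = A := hsplit1 hAM hBM
    have e2 : (A ∪ B) \ M = B := hsplit2 hAM hBM
    have e3 : insert j (A ∪ B) = (insert j A) ∪ B := by
      rw [Finset.insert_union]
    have e4 : ((insert j A) ∪ B) ∩ M = insert j A := hsplit1 hiAM hBM
    have e5 : ((insert j A) ∪ B) \ M = B := hsplit2 hiAM hBM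
    have hm1 : φ (insert j (A ∪ B)) = ψ B (if χ (insert j A) = 1 then true else false) := by
      rw [hmod, e3, e4, e5]
    have hm0 : φ (A ∪ B) = ψ B (if χ A = 1 then true else false) := by
      rw [hmod, e1, e2]
    constructor
    · rintro ⟨hp1, hp0⟩
      rcases hχ01 A hAM with hA0 | hA1
      · have hb0 : (if χ A = 1 then true else false) = false := by
          rw [hA0]; norm_num
        rw [hm0, hb0] at hp0
        rcases hχ01 _ hiAM with hi0 | hi1
        · exfalso
          have hb1 : (if χ (insert j A) = 1 then true else false) = false := by
            rw [hi0]; norm_num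
          rw [hm1, hb1, hp0] at hp1
          norm_num at hp1
        · have hb1 : (if χ (insert j A) = 1 then true else false) = true := by
            rw [hi1]; norm_num
          rw [hm1, hb1] at hp1
          exact ⟨hi1, hA0, hp1, hp0⟩
      · exfalso
        have hi1 : χ (insert j A) = 1 :=
          fone hχmono hχ01 hA1 (Finset.subset_insert j A) hiAM
        have hb1 : (if χ (insert j A) = 1 then true else false) = true := by
          rw [hi1]; norm_num
        have hb0 : (if χ A = 1 then true else false) = true := by
          rw [hA1]; norm_num
        rw [hm1, hb1] at hp1
        rw [hm0, hb0, hp1] at hp0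
        norm_num at hp0
    · rintro ⟨hi1, hA0, hps1, hps0⟩
      have hb1 : (if χ (insert j A) = 1 then true else false) = true := by
        rw [hi1]; norm_num
      have hb0 : (if χ A = 1 then true else false) = false := by
        rw [hA0]; norm_num
      rw [hm1, hb1, hm0, hb0]
      exact ⟨hps1, hps0⟩
  -- Step 3 : reindexing of the P₁-sum
  have hstep3 : ∑ p ∈ P₁, relQual μ T p.1 p.2
      = ∑ q ∈ P₂ ×ˢ BD, relQual μ T q.1.1 (q.1.2 ∪ q.2) := by
    refine Finset.sum_nbij' (i := fun p => ((p.1, p.2 ∩ M), p.2 \ M))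
      (j := fun q => (q.1.1, q.1.2 ∪ q.2)) ?_ ?_ ?_ ?_ ?_
    · intro p hp
      obtain ⟨hj, h1, h2, h3, h4⟩ := (hmemP₁ _).mp hp
      have hAM : p.2 ∩ M ⊆ M := Finset.inter_subset_right
      have hBM : ∀ i ∈ p.2 \ M, i ∉ M := fun i hi => (Finset.mem_sdiff.mp hi).2
      have hAsub : p.2 ∩ M ⊆ M \ {p.1} := by
        intro i hi
        refine Finset.mem_sdiff.mpr ⟨(Finset.mem_inter.mp hi).2, ?_⟩
        have := (Finset.mem_sdiff.mp (h1 (Finset.mem_inter.mp hi).1)).2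
        simpa using this
      have hBsub : p.2 \ M ⊆ Finset.univ \ M := fun i hi =>
        Finset.mem_sdiff.mpr ⟨Finset.mem_univ i, (Finset.mem_sdiff.mp hi).2⟩
      have hu : (p.2 ∩ M) ∪ (p.2 \ M) = p.2 := finset_inter_union_diff p.2 M
      have hφc : φ (insert p.1 ((p.2 ∩ M) ∪ (p.2 \ M))) = 1 ∧ φ ((p.2 ∩ M) ∪ (p.2 \ M)) = 0 := by
        rw [hu]; exact ⟨h3, h4⟩
      obtain ⟨hc1, hc0, hd1, hd0⟩ := (hkey hj hAsub hBsub).mp hφc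
      rw [Finset.mem_product]
      constructor
      · refine (hmemP₂ _).mpr ⟨hj, hAsub, ?_, hc1, hc0⟩
        rw [Finset.inter_assoc, Finset.inter_self]
        exact h2
      · exact (hmemBD _).mpr ⟨hBsub, hd1, hd0⟩
    · intro q hq
      rw [Finset.mem_product] at hq
      obtain ⟨hj, h1, h2, h3, h4⟩ := (hmemP₂ _).mp hq.1
      obtain ⟨hB, hd1, hd0⟩ := (hmemBD _).mp hq.2
      have hAM : q.1.2 ⊆ M := h1.trans Finset.sdiff_subset
      have hBM : ∀ i ∈ q.2, i ∉ M := fun i hi => (Finset.mem_sdiff.mp (hB hi)).2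
      refine (hmemP₁ _).mpr ⟨hj, ?_, ?_, ?_, ?_⟩
      · intro i hi
        refine Finset.mem_sdiff.mpr ⟨Finset.mem_univ i, ?_⟩
        simp only [Finset.mem_singleton]
        rintro rfl
        rcases Finset.mem_union.mp hi with hi | hi
        · exact absurd (Finset.mem_sdiff.mp (h1 hi)).2 (by simp)
        · exact hBM _ hi hj
      · rw [hsplit1 hAM hBM]
        rwa [Finset.inter_eq_left.mpr hAM] at h2
      · exact ((hkey hj h1 hB).mpr ⟨h3, h4, hd1, hd0⟩).1
      · exact ((hkey hj h1 hB).mpr ⟨h3, h4, hd1, hd0⟩).2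
    · intro p hp
      simp only [finset_inter_union_diff]
    · intro q hq
      rw [Finset.mem_product] at hq
      obtain ⟨hj, h1, h2, h3, h4⟩ := (hmemP₂ _).mp hq.1
      obtain ⟨hB, hd1, hd0⟩ := (hmemBD _).mp hq.2
      have hAM : q.1.2 ⊆ M := h1.trans Finset.sdiff_subset
      have hBM : ∀ i ∈ q.2, i ∉ M := fun i hi => (Finset.mem_sdiff.mp (hB hi)).2
      have := hsplit1 hAM hBM
      have := hsplit2 hAM hBM
      ext <;> simp_all
    · intro p hp
      rw [finset_inter_union_diff]
  -- Step 4 : factor each term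
  have hstep4 : ∀ q ∈ P₂ ×ˢ BD, relQual μ T q.1.1 (q.1.2 ∪ q.2)
      = relQualMod μ T M q.1.1 q.1.2 *
        (relQual μ T j₀ (A₀ ∪ q.2) / relQualMod μ T M j₀ A₀) := by
    intro q hq
    rw [Finset.mem_product] at hq
    obtain ⟨hj, h1, h2, h3, h4⟩ := (hmemP₂ _).mp hq.1
    obtain ⟨hB, hd1, hd0⟩ := (hmemBD _).mp hq.2
    have hAM : q.1.2 ⊆ M := h1.trans Finset.sdiff_subset
    have hcardA : q.1.2.card = c := by
      rwa [Finset.inter_eq_left.mpr hAM] at h2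
    by_cases hz : relQualMod μ T M q.1.1 q.1.2 = 0
    · rw [hz, zero_mul]
      -- relQual is sandwiched between 0 and relQualMod = 0
      have hle : relQual μ T q.1.1 (q.1.2 ∪ q.2) ≤ relQualMod μ T M q.1.1 q.1.2 := by
        rw [relQual, relQualMod]
        refine ENNReal.toReal_mono (measure_ne_top μ _) (measure_mono ?_)
        rintro ω ⟨ha, hb⟩
        refine ⟨fun i hiM hiA => ?_, fun i hi => hb i (Finset.mem_union_left _ hi)⟩
        refine ha i ?_
        rw [Finset.mem_union, not_or]
        exact ⟨hiA, fun hiB => (Finset.mem_sdiff.mp (hB hiB)).2 hiM⟩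
      have hge : 0 ≤ relQual μ T q.1.1 (q.1.2 ∪ q.2) := ENNReal.toReal_nonneg
      linarith [hz ▸ hle]
    · have := hratio q.1.1 hj j₀ hj₀ q.1.2 h1 A₀ hA₀ (by rw [hcardA, hcard₀]) hz hq₀ q.2 hB
      rw [div_eq_div_iff hz hq₀] at this
      field_simp
      linarith [this]
  -- Step 5 : the weighted powerset sum reduces to the BD sum
  have hstep5 : ∑ B ∈ ((Finset.univ : Finset (Fin n)) \ M).powerset,
        (relQual μ T j₀ (A₀ ∪ B) / relQualMod μ T M j₀ A₀) * (ψ B true - ψ B false)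
      = ∑ B ∈ BD, relQual μ T j₀ (A₀ ∪ B) / relQualMod μ T M j₀ A₀ := by
    rw [hBD, Finset.sum_filter]
    refine Finset.sum_congr rfl (fun B hB => ?_)
    have hBsub : B ⊆ Finset.univ \ M := Finset.mem_powerset.mp hB
    have hmono' : ψ B false ≤ ψ B true :=
      hψmono B B false true (Finset.Subset.refl B) hBsub (fun h => by simp at h)
    rcases hψ01 B true hBsub with ht | ht <;> rcases hψ01 B false hBsub with hf | hf
    · rw [ht, hf]
      simp
    · exfalso
      rw [ht, hf] at hmono'
      norm_num at hmono'
    · rw [ht, hf]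
      norm_num
    · rw [ht, hf]
      simp
  -- assemble
  have hfactor : ∑ q ∈ P₂ ×ˢ BD, relQualMod μ T M q.1.1 q.1.2 *
        (relQual μ T j₀ (A₀ ∪ q.2) / relQualMod μ T M j₀ A₀)
      = (∑ p ∈ P₂, relQualMod μ T M p.1 p.2) *
        ∑ B ∈ BD, relQual μ T j₀ (A₀ ∪ B) / relQualMod μ T M j₀ A₀ := by
    rw [Finset.sum_product, Finset.sum_mul]
    exact Finset.sum_congr rfl fun p _ => by rw [Finset.mul_sum]
  rw [hsum1, hstep3, Finset.sum_congr rfl hstep4, hfactor, hsum2, hstep5]
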